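/- Every element of the point group of a cluster belongs to its sticky symmetry group: if (P, δ) ∈ P(N) × C_2 and there exists R ∈ SO(3) with δ(P ⊗ I_3)x = (R ⊗ I_N)x (i.e. applying R to each x_i ∈ ℝ^3), then there is a continuous path φ : [0,1] → M_A with φ(0) = x and φ(1) = δ(P ⊗ I_3)x; hence P_x ⊆ T_x. -/

import Mathlib

open scoped RealInnerProductSpace Matrix

set_option maxHeartbeats 1000000

section Aux

local notation "E3" => EuclideanSpace ℝ (Fin 3)

lemma sticky_toEuclideanLin_mul (M N : Matrix (Fin 3) (Fin 3) ℝ) (v : E3) :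
    Matrix.toEuclideanLin (M * N) v
      = Matrix.toEuclideanLin M (Matrix.toEuclideanLin N v) := by
  simp [Matrix.toEuclideanLin_apply, Matrix.mulVec_mulVec]

lemma sticky_inner_map (R : Matrix (Fin 3) (Fin 3) ℝ)
    (hR : R ∈ Matrix.orthogonalGroup (Fin 3) ℝ) (v w : E3) :
    ⟪Matrix.toEuclideanLin R v, Matrix.toEuclideanLin R w⟫ = ⟪v, w⟫ := by
  have h1 : Rᴴ * R = 1 := Matrix.mem_unitaryGroup_iff'.mp hR
  calc ⟪Matrix.toEuclideanLin R v, Matrix.toEuclideanLin R w⟫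
      = ⟪v, Matrix.toEuclideanLin Rᴴ (Matrix.toEuclideanLin R w)⟫ := by
        rw [Matrix.toEuclideanLin_conjTranspose_eq_adjoint]
        exact (LinearMap.adjoint_inner_right _ _ _).symm
    _ = ⟪v, w⟫ := by
        rw [← sticky_toEuclideanLin_mul, h1]; simp [Matrix.toEuclideanLin_apply]

lemma sticky_fixed_vector (R : Matrix (Fin 3) (Fin 3) ℝ)
    (hR : R ∈ Matrix.specialOrthogonalGroup (Fin 3) ℝ) :
    ∃ u : E3, ‖u‖ = 1 ∧ Matrix.toEuclideanLin R u = u := by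
  obtain ⟨hO, hdet⟩ := Matrix.mem_specialOrthogonalGroup_iff.mp hR
  have h1 : Rᴴ * R = 1 := Matrix.mem_unitaryGroup_iff'.mp hO
  have hdetH : Rᴴ.det = 1 := by
    rw [Matrix.det_conjTranspose, hdet]; simp
  have key : (R - 1).det = -(R - 1).det := by
    calc (R - 1).det = ((R - 1)ᴴ).det := by
          rw [Matrix.det_conjTranspose]; simp
      _ = (Rᴴ * (1 - R)).det := by
          rw [Matrix.mul_sub, Matrix.mul_one, h1, Matrix.conjTranspose_sub,
            Matrix.conjTranspose_one]
      _ = Rᴴ.det * (1 - R).det := Matrix.det_mul _ _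
      _ = ((-1 : Matrix (Fin 3) (Fin 3) ℝ) * (R - 1)).det := by
          rw [hdetH, one_mul, neg_one_mul, neg_sub]
      _ = -(R - 1).det := by
          rw [Matrix.det_mul, Matrix.det_neg]; norm_num
  have hdet0 : (R - 1).det = 0 := by linarith
  obtain ⟨v, hv0, hv⟩ := (Matrix.exists_mulVec_eq_zero_iff).mpr hdet0
  have hRv : R *ᵥ v = v := by
    have := hv
    rw [Matrix.sub_mulVec, Matrix.one_mulVec, sub_eq_zero] at this
    exact this
  set u0 : E3 := (WithLp.equiv 2 (Fin 3 → ℝ)).symm v with hu0def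
  have hfix0 : Matrix.toEuclideanLin R u0 = u0 := by
    rw [hu0def, WithLp.equiv_symm_apply, Matrix.toEuclideanLin_apply_piLp_toLp, hRv]
  have hu0ne : u0 ≠ 0 := by
    intro hcon
    apply hv0
    have := congrArg (WithLp.equiv 2 (Fin 3 → ℝ)) hcon
    simpa [hu0def] using this
  have hnorm : ‖u0‖ ≠ 0 := norm_ne_zero_iff.mpr hu0ne
  refine ⟨‖u0‖⁻¹ • u0, ?_, ?_⟩
  · rw [norm_smul]; simp [abs_of_nonneg (norm_nonneg u0), inv_mul_cancel₀ hnorm]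
  · rw [map_smul, hfix0]

lemma sticky_path (R : Matrix (Fin 3) (Fin 3) ℝ)
    (hR : R ∈ Matrix.specialOrthogonalGroup (Fin 3) ℝ) :
    ∃ F : ℝ → E3 → E3,
      (∀ v, F 0 v = v) ∧ (∀ v, F 1 v = Matrix.toEuclideanLin R v) ∧
      (∀ t v w, dist (F t v) (F t w) = dist v w) ∧
      (∀ v, Continuous fun t => F t v) := by
  obtain ⟨hO, hdet⟩ := Matrix.mem_specialOrthogonalGroup_iff.mp hR
  obtain ⟨u, hu1, hufix⟩ := sticky_fixed_vector R hR
  set r := Matrix.toEuclideanLin R with hrdef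
  have hip : ∀ v w : E3, ⟪r v, r w⟫ = ⟪v, w⟫ := sticky_inner_map R hO
  -- orthonormal basis extension
  have hcard : Module.finrank ℝ E3 = Fintype.card (Fin 3) := by simp
  have horth : Orthonormal ℝ (({0} : Set (Fin 3)).restrict (fun _ => u)) := by
    constructor
    · intro i; exact hu1
    · intro i j hij
      exfalso; apply hij
      have hi : (i : Fin 3) = 0 := i.2
      have hj : (j : Fin 3) = 0 := j.2
      exact Subtype.ext (hi.trans hj.symm)
  obtain ⟨b, hb⟩ := horth.exists_orthonormalBasis_extension_of_card_eq hcard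
  have hb0 : b 0 = u := hb 0 rfl
  have hione : ∀ i j, ⟪b i, b j⟫ = if i = j then 1 else 0 :=
    orthonormal_iff_ite.mp b.orthonormal
  have hr0 : r (b 0) = b 0 := by rw [hb0]; exact hufix
  -- the 2x2 block
  set a : ℝ := ⟪b 1, r (b 1)⟫ with ha
  set β : ℝ := ⟪b 2, r (b 1)⟫ with hβ
  set c : ℝ := ⟪b 1, r (b 2)⟫ with hc'
  set d : ℝ := ⟪b 2, r (b 2)⟫ with hd'
  have hz1 : ⟪b 0, r (b 1)⟫ = 0 := by
    have := hip (b 0) (b 1); rw [hr0] at this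
    rw [this, hione]; simp
  have hz2 : ⟪b 0, r (b 2)⟫ = 0 := by
    have := hip (b 0) (b 2); rw [hr0] at this
    rw [this, hione]; simp
  have hexp : ∀ w : E3, w = ⟪b 0, w⟫ • b 0 + ⟪b 1, w⟫ • b 1 + ⟪b 2, w⟫ • b 2 := by
    intro w
    have := b.sum_repr' w
    rw [Fin.sum_univ_three] at this
    exact this.symm
  have hrb1 : r (b 1) = a • b 1 + β • b 2 := by
    have h := hexp (r (b 1))
    rw [hz1, zero_smul, zero_add] at h
    exact h
  have hrb2 : r (b 2) = c • b 1 + d • b 2 := by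
    have h := hexp (r (b 2))
    rw [hz2, zero_smul, zero_add] at h
    exact h
  have hinner3 : ∀ p q s p' q' s' : ℝ,
      ⟪p • b 0 + q • b 1 + s • b 2, p' • b 0 + q' • b 1 + s' • b 2⟫
        = p * p' + q * q' + s * s' := by
    intro p q s p' q' s'
    simp only [inner_add_left, inner_add_right, real_inner_smul_left, real_inner_smul_right,
      hione]
    simp
    ring
  have hrb1' : r (b 1) = (0:ℝ) • b 0 + a • b 1 + β • b 2 := by
    rw [hrb1, zero_smul, zero_add]
  have hrb2' : r (b 2) = (0:ℝ) • b 0 + c • b 1 + d • b 2 := by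
    rw [hrb2, zero_smul, zero_add]
  have e1 : a * a + β * β = 1 := by
    have h := hip (b 1) (b 1)
    rw [hrb1', hinner3, hione] at h
    simp at h
    linarith
  have e2 : a * c + β * d = 0 := by
    have h := hip (b 1) (b 2)
    rw [hrb1', hrb2', hinner3, hione] at h
    simp at h
    linarith
  have e3 : c * c + d * d = 1 := by
    have h := hip (b 2) (b 2)
    rw [hrb2', hinner3, hione] at h
    simp at h
    linarith
  -- determinant
  have hdetr : LinearMap.det r = 1 := by
    have : LinearMap.det (Matrix.toLin (PiLp.basisFun 2 ℝ (Fin 3)) (PiLp.basisFun 2 ℝ (Fin 3)) R)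
        = R.det := LinearMap.det_toLin _ R
    rw [hrdef, Matrix.toEuclideanLin_eq_toLin, this, hdet]
  have e4 : a * d - c * β = 1 := by
    have hmat : ∀ i j, LinearMap.toMatrix b.toBasis b.toBasis r i j = ⟪b i, r (b j)⟫ := by
      intro i j
      rw [LinearMap.toMatrix_apply, OrthonormalBasis.coe_toBasis,
        OrthonormalBasis.coe_toBasis_repr_apply, OrthonormalBasis.repr_apply_apply]
    have h5 : (LinearMap.toMatrix b.toBasis b.toBasis r).det = 1 := by
      rw [LinearMap.det_toMatrix]; exact hdetr
    rw [Matrix.det_fin_three] at h5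
    simp only [hmat] at h5
    rw [hr0] at h5
    rw [hz1, hz2] at h5
    have i00 : ⟪b 0, b 0⟫ = (1:ℝ) := by rw [hione]; simp
    have i10 : ⟪b 1, b 0⟫ = (0:ℝ) := by rw [hione]; simp
    have i20 : ⟪b 2, b 0⟫ = (0:ℝ) := by rw [hione]; simp
    rw [i00, i10, i20] at h5
    rw [← ha, ← hβ, ← hc', ← hd'] at h5
    ring_nf at h5 ⊢
    linarith
  have hcd1 : c = -β := by linear_combination a * e2 - β * e4 - c * e1
  have hcd2 : d = a := by linear_combination β * e2 + a * e4 - d * e1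
  -- angle
  set z : ℂ := ⟨a, β⟩ with hz
  have habs : ‖z‖ = 1 := by
    rw [Complex.norm_def, Complex.normSq_mk]
    rw [e1, Real.sqrt_one]
  have hz0 : z ≠ 0 := by
    intro hcon; rw [hcon] at habs; simp at habs
  set θ := Complex.arg z with hθ
  have hcos : Real.cos θ = a := by
    rw [hθ, Complex.cos_arg hz0, habs]; simp [hz]
  have hsin : Real.sin θ = β := by
    rw [hθ, Complex.sin_arg, habs]; simp [hz]
  -- the path
  refine ⟨fun t w => ⟪b 0, w⟫ • b 0
      + (Real.cos (t * θ) * ⟪b 1, w⟫ - Real.sin (t * θ) * ⟪b 2, w⟫) • b 1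
      + (Real.sin (t * θ) * ⟪b 1, w⟫ + Real.cos (t * θ) * ⟪b 2, w⟫) • b 2,
    ?_, ?_, ?_, ?_⟩
  · intro v
    simp only [zero_mul, Real.cos_zero, Real.sin_zero, one_mul, zero_mul, sub_zero, zero_add,
      add_zero]
    exact (hexp v).symm
  · intro v
    dsimp only
    rw [one_mul, hcos, hsin]
    conv_rhs => rw [hexp v]
    rw [map_add, map_add, map_smul, map_smul, map_smul]
    rw [hr0, hrb1, hrb2, hcd1, hcd2]
    match_scalars <;> ring
  · intro t v w
    dsimp only
    have hFsub : (⟪b 0, v⟫ • b 0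
        + (Real.cos (t * θ) * ⟪b 1, v⟫ - Real.sin (t * θ) * ⟪b 2, v⟫) • b 1
        + (Real.sin (t * θ) * ⟪b 1, v⟫ + Real.cos (t * θ) * ⟪b 2, v⟫) • b 2)
        - (⟪b 0, w⟫ • b 0
        + (Real.cos (t * θ) * ⟪b 1, w⟫ - Real.sin (t * θ) * ⟪b 2, w⟫) • b 1
        + (Real.sin (t * θ) * ⟪b 1, w⟫ + Real.cos (t * θ) * ⟪b 2, w⟫) • b 2)
        = ⟪b 0, v - w⟫ • b 0
        + (Real.cos (t * θ) * ⟪b 1, v - w⟫ - Real.sin (t * θ) * ⟪b 2, v - w⟫) • b 1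
        + (Real.sin (t * θ) * ⟪b 1, v - w⟫ + Real.cos (t * θ) * ⟪b 2, v - w⟫) • b 2 := by
      simp only [inner_sub_right]
      match_scalars <;> ring
    rw [dist_eq_norm, dist_eq_norm, hFsub]
    set q0 : ℝ := ⟪b 0, v - w⟫
    set q1 : ℝ := ⟪b 1, v - w⟫
    set q2 : ℝ := ⟪b 2, v - w⟫
    rw [norm_eq_sqrt_real_inner, norm_eq_sqrt_real_inner]
    congr 1
    have hrhs : ⟪v - w, v - w⟫ = q0 * q0 + q1 * q1 + q2 * q2 := by
      conv_lhs => rw [hexp (v - w)]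
      exact hinner3 _ _ _ _ _ _
    rw [hrhs, hinner3]
    have hpyth := Real.sin_sq_add_cos_sq (t * θ)
    linear_combination (q1 * q1 + q2 * q2) * hpyth
  · intro v
    apply Continuous.add
    apply Continuous.add
    · exact continuous_const
    · exact (((Real.continuous_cos.comp (continuous_id.mul continuous_const)).mul
        continuous_const).sub
        ((Real.continuous_sin.comp (continuous_id.mul continuous_const)).mul
        continuous_const)).smul continuous_const
    · exact (((Real.continuous_sin.comp (continuous_id.mul continuous_const)).mul
        continuous_const).add
        ((Real.continuous_cos.comp (continuous_id.mul continuous_const)).mul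
        continuous_const)).smul continuous_const

end Aux

abbrev Config (N : ℕ) := Fin N → EuclideanSpace ℝ (Fin 3)

def MSet (N : ℕ) (r : ℝ) (A : Fin N → Fin N → Prop) : Set (Config N) :=
  {y | ∀ i j, i ≠ j →
    (A i j → dist (y i) (y j) = 2 * r) ∧ (¬ A i j → 2 * r < dist (y i) (y j))}

/-- Every element of the point group belongs to the sticky symmetry group: if
`δ(P ⊗ I₃)x = (R ⊗ I_N)x` for a rotation `R ∈ SO(3)`, then there is a continuous path
in `M_A` from `x` to `δ(P ⊗ I₃)x`; hence `P_x ⊆ T_x`. -/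
theorem point_group_subset_sticky (N : ℕ) (r : ℝ) (hr : 0 < r)
    (A : Fin N → Fin N → Prop) (x : Config N) (hx : x ∈ MSet N r A)
    (π : Equiv.Perm (Fin N)) (δ : ℝ) (hδ : δ = 1 ∨ δ = -1)
    (R : Matrix (Fin 3) (Fin 3) ℝ) (hR : R ∈ Matrix.specialOrthogonalGroup (Fin 3) ℝ)
    (h : (fun i => δ • x (π⁻¹ i)) = fun i => Matrix.toEuclideanLin R (x i)) :
    JoinedIn (MSet N r A) x (fun i => δ • x (π⁻¹ i)) := by
  rw [h]
  obtain ⟨F, hF0, hF1, hFd, hFc⟩ := sticky_path R hR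
  refine ⟨{ toFun := fun t => fun i => F (t : ℝ) (x i)
            continuous_toFun := continuous_pi fun i => (hFc (x i)).comp continuous_subtype_val
            source' := funext fun i => by simp [hF0]
            target' := funext fun i => by simp [hF1] }, ?_⟩
  intro t
  intro i j hij
  refine ⟨fun hA => ?_, fun hA => ?_⟩
  · show dist (F (t:ℝ) (x i)) (F (t:ℝ) (x j)) = 2 * r
    rw [hFd]; exact (hx i j hij).1 hA
  · show 2 * r < dist (F (t:ℝ) (x i)) (F (t:ℝ) (x j))
    rw [hFd]; exact (hx i j hij).2 hA
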